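/- For every finite-dimensional normed space X and any two norms P, Q on X, the distance ∂_{X,𝔾}(P,Q) equals α_X(P,Q), where α_X(P,Q) is the Hausdorff distance (with respect to the norm N* dual to the norm N of X) between the unit balls of the dual norms P* and Q* on X*. -/

import Mathlib

/-- `N` is a norm on the real vector space `V`. -/
def IsNormOn {V : Type} [AddCommGroup V] [Module ℝ V] (N : V → ℝ) : Prop :=
  (∀ x, 0 ≤ N x) ∧ (∀ x, N x = 0 → x = 0) ∧
    (∀ (a : ℝ) (x : V), N (a • x) = |a| * N x) ∧
    ∀ x y, N (x + y) ≤ N x + N y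

/-- Hausdorff distance between subsets of `V` with respect to the gauge `N₀`. -/
noncomputable def hausdorffWrt {V : Type*} [AddCommGroup V]
    (N₀ : V → ℝ) (A B : Set V) : ℝ :=
  sInf {δ : ℝ | 0 ≤ δ ∧ (∀ a ∈ A, ∃ b ∈ B, N₀ (a - b) ≤ δ) ∧
    ∀ b ∈ B, ∃ a ∈ A, N₀ (a - b) ≤ δ}

/-- The dual norm on `X*` of a norm (given as a function) `P` on `X`. -/
noncomputable def dualNormOf {X : Type} [AddCommGroup X] [Module ℝ X]
    (P : X → ℝ) (f : Module.Dual ℝ X) : ℝ :=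
  sSup {r : ℝ | ∃ x, P x ≤ 1 ∧ r = |f x|}

/-- `α_X(P,Q)`: the Hausdorff distance, with respect to the dual norm `N*` of the norm of
`X`, between the unit balls of the dual norms `P*` and `Q*` on `X*`. -/
noncomputable def alphaDist (X : Type) [NormedAddCommGroup X] [NormedSpace ℝ X]
    (P Q : X → ℝ) : ℝ :=
  hausdorffWrt (dualNormOf (fun x : X => ‖x‖))
    {f : Module.Dual ℝ X | dualNormOf P f ≤ 1}
    {f : Module.Dual ℝ X | dualNormOf Q f ≤ 1}

/-- `∂_{X,𝔾}(P,Q)`: the infimum of `‖T − U‖` over pairs of injective linear maps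
`T, U : X → 𝔾` inducing the norms `P` and `Q` respectively. -/
noncomputable def partialDist (𝔾 : Type) [NormedAddCommGroup 𝔾] [NormedSpace ℝ 𝔾]
    (X : Type) [NormedAddCommGroup X] [NormedSpace ℝ X] [FiniteDimensional ℝ X]
    (P Q : X → ℝ) : ℝ :=
  sInf {c : ℝ | ∃ T U : X →ₗ[ℝ] 𝔾,
    Function.Injective ⇑T ∧ Function.Injective ⇑U ∧
    (∀ x, ‖T x‖ = P x) ∧ (∀ x, ‖U x‖ = Q x) ∧
    c = ‖LinearMap.toContinuousLinearMap (T - U)‖}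


namespace GurarijAux

variable {V : Type} [AddCommGroup V] [Module ℝ V]

theorem normOn_zero {N : V → ℝ} (h : IsNormOn N) : N 0 = 0 := by
  have := h.2.2.1 0 0
  simpa using this

theorem normOn_neg {N : V → ℝ} (h : IsNormOn N) (x : V) : N (-x) = N x := by
  have := h.2.2.1 (-1) x
  simpa using this

theorem normOn_pos {N : V → ℝ} (h : IsNormOn N) {x : V} (hx : x ≠ 0) : 0 < N x :=
  lt_of_le_of_ne (h.1 x) fun hc => hx (h.2.1 x hc.symm)

/-- Type synonym carrying the norm `N`. -/
def Syn (V : Type) (_N : V → ℝ) : Type := V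

def toSyn (N : V → ℝ) : V ≃ (Syn V N) := Equiv.refl V

theorem isNormOn_norm (X : Type) [NormedAddCommGroup X] [NormedSpace ℝ X] :
    IsNormOn (fun x : X => ‖x‖) :=
  ⟨fun x => norm_nonneg x, fun x hx => norm_eq_zero.mp hx,
    fun a x => by simp [norm_smul, Real.norm_eq_abs], fun x y => norm_add_le x y⟩

section Master

variable (N : V → ℝ) (hN : IsNormOn N)

noncomputable def synAddCommGroup : AddCommGroup (Syn V N) := inferInstanceAs (AddCommGroup V)

noncomputable def synNormed (hN : IsNormOn N) :
    @NormedAddCommGroup (Syn V N) := by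
  letI : AddCommGroup (Syn V N) := synAddCommGroup N
  letI : Module ℝ (Syn V N) := inferInstanceAs (Module ℝ V)
  exact AddGroupNorm.toNormedAddCommGroup
    { toFun := fun x => N ((toSyn N).symm x)
      map_zero' := (normOn_zero hN)
      add_le' := fun x y => hN.2.2.2 _ _
      neg' := fun x => (normOn_neg hN _)
      eq_zero_of_map_eq_zero' := fun x hx => hN.2.1 _ hx }

end Master

section Facts

variable {X : Type} [NormedAddCommGroup X] [NormedSpace ℝ X]

/-- Equivalence of an abstract norm with the ambient norm, on a f.d. space. -/
theorem norm_equiv [FiniteDimensional ℝ X] (N : X → ℝ) (hN : IsNormOn N) :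
    ∃ c : ℝ, 0 < c ∧ (∀ x, N x ≤ c * ‖x‖) ∧ ∀ x, ‖x‖ ≤ c * N x := by
  letI : NormedAddCommGroup (Syn X N) := synNormed N hN
  letI : Module ℝ (Syn X N) := inferInstanceAs (Module ℝ X)
  letI : NormedSpace ℝ (Syn X N) :=
    ⟨fun a x => le_of_eq (by
      show N (a • ((toSyn N).symm x)) = ‖a‖ * N ((toSyn N).symm x)
      rw [hN.2.2.1, Real.norm_eq_abs])⟩
  let e : X ≃ₗ[ℝ] Syn X N :=
    { toFun := toSyn N, invFun := (toSyn N).symm,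
      map_add' := fun _ _ => rfl, map_smul' := fun _ _ => rfl,
      left_inv := fun _ => rfl, right_inv := fun _ => rfl }
  haveI : FiniteDimensional ℝ (Syn X N) := e.finiteDimensional
  have hsyn : ∀ y : Syn X N, ‖y‖ = N ((toSyn N).symm y) := fun y => rfl
  let F := LinearMap.toContinuousLinearMap e.toLinearMap
  let G := LinearMap.toContinuousLinearMap e.symm.toLinearMap
  refine ⟨max ‖F‖ ‖G‖ + 1, ?_, fun x => ?_, fun x => ?_⟩
  · have := norm_nonneg F
    have := le_max_left ‖F‖ ‖G‖
    linarith
  · have h1 : ‖F x‖ ≤ ‖F‖ * ‖x‖ := F.le_opNorm x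
    have h2 : ‖F x‖ = N x := rfl
    have h3 : ‖F‖ ≤ max ‖F‖ ‖G‖ + 1 := by
      have := le_max_left ‖F‖ ‖G‖; linarith
    calc N x = ‖F x‖ := h2.symm
      _ ≤ ‖F‖ * ‖x‖ := h1
      _ ≤ (max ‖F‖ ‖G‖ + 1) * ‖x‖ := by
          exact mul_le_mul_of_nonneg_right h3 (norm_nonneg x)
  · have h1 : ‖G (toSyn N x)‖ ≤ ‖G‖ * ‖toSyn N x‖ := G.le_opNorm _
    have h2 : ‖G (toSyn N x)‖ = ‖x‖ := rfl
    have h2' : ‖toSyn N x‖ = N x := rfl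
    have h3 : ‖G‖ ≤ max ‖F‖ ‖G‖ + 1 := by
      have := le_max_right ‖F‖ ‖G‖; linarith
    have hNx : 0 ≤ N x := hN.1 x
    calc ‖x‖ = ‖G (toSyn N x)‖ := h2.symm
      _ ≤ ‖G‖ * N x := by rw [← h2']; exact h1
      _ ≤ (max ‖F‖ ‖G‖ + 1) * N x := mul_le_mul_of_nonneg_right h3 hNx

/-- Norming functional for an abstract norm. -/
theorem exists_norming [FiniteDimensional ℝ X] (N : X → ℝ) (hN : IsNormOn N) (x : X) :
    ∃ f : Module.Dual ℝ X, (∀ z, |f z| ≤ N z) ∧ f x = N x := by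
  by_cases hx : x = 0
  · exact ⟨0, fun z => by simpa using hN.1 z, by simp [hx, (normOn_zero hN)]⟩
  letI : NormedAddCommGroup (Syn X N) := synNormed N hN
  letI : Module ℝ (Syn X N) := inferInstanceAs (Module ℝ X)
  letI : NormedSpace ℝ (Syn X N) :=
    ⟨fun a x => le_of_eq (by
      show N (a • ((toSyn N).symm x)) = ‖a‖ * N ((toSyn N).symm x)
      rw [hN.2.2.1, Real.norm_eq_abs])⟩
  let e : X ≃ₗ[ℝ] Syn X N :=
    { toFun := toSyn N, invFun := (toSyn N).symm,
      map_add' := fun _ _ => rfl, map_smul' := fun _ _ => rfl,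
      left_inv := fun _ => rfl, right_inv := fun _ => rfl }
  have hx' : (e x : Syn X N) ≠ 0 := by
    intro h; exact hx (by simpa using congrArg e.symm h)
  obtain ⟨g, hg1, hg2⟩ := exists_dual_vector ℝ (e x) (norm_ne_zero_iff.mpr hx')
  refine ⟨(g.toLinearMap).comp e.toLinearMap, fun z => ?_, ?_⟩
  · have := g.le_opNorm (e z)
    have hz : ‖(e z : Syn X N)‖ = N z := rfl
    simpa [hg1, hz, Real.norm_eq_abs] using this
  · have : ‖(e x : Syn X N)‖ = N x := rfl
    simpa [this] using hg2

/-- Isometric image of an abstract norm inside a universal space. -/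
theorem exists_embedding (𝔾 : Type) [NormedAddCommGroup 𝔾] [NormedSpace ℝ 𝔾]
    (huniv : ∀ (Z : Type) [NormedAddCommGroup Z] [NormedSpace ℝ Z]
      [FiniteDimensional ℝ Z], Nonempty (Z →ₗᵢ[ℝ] 𝔾))
    [FiniteDimensional ℝ X] (N : X → ℝ) (hN : IsNormOn N) :
    ∃ T : X →ₗ[ℝ] 𝔾, ∀ x, ‖T x‖ = N x := by
  letI : NormedAddCommGroup (Syn X N) := synNormed N hN
  letI : Module ℝ (Syn X N) := inferInstanceAs (Module ℝ X)
  letI : NormedSpace ℝ (Syn X N) :=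
    ⟨fun a x => le_of_eq (by
      show N (a • ((toSyn N).symm x)) = ‖a‖ * N ((toSyn N).symm x)
      rw [hN.2.2.1, Real.norm_eq_abs])⟩
  let e : X ≃ₗ[ℝ] Syn X N :=
    { toFun := toSyn N, invFun := (toSyn N).symm,
      map_add' := fun _ _ => rfl, map_smul' := fun _ _ => rfl,
      left_inv := fun _ => rfl, right_inv := fun _ => rfl }
  haveI : FiniteDimensional ℝ (Syn X N) := e.finiteDimensional
  obtain ⟨ι⟩ := huniv (Syn X N)
  refine ⟨(ι.toLinearMap).comp e.toLinearMap, fun x => ?_⟩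
  have h1 : ‖ι (e x)‖ = ‖(e x : Syn X N)‖ := ι.norm_map _
  have h2 : ‖(e x : Syn X N)‖ = N x := rfl
  show ‖ι (e x)‖ = N x
  exact h1.trans h2

theorem inj_of_norm {𝔾 : Type} [NormedAddCommGroup 𝔾] [NormedSpace ℝ 𝔾]
    (T : X →ₗ[ℝ] 𝔾) {P : X → ℝ} (hP : IsNormOn P) (h : ∀ x, ‖T x‖ = P x) :
    Function.Injective ⇑T := by
  intro u v huv
  have h0 : T (u - v) = 0 := by rw [map_sub, huv, sub_self]
  have h1 : P (u - v) = 0 := by rw [← h, h0, norm_zero]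
  exact sub_eq_zero.mp (hP.2.1 _ h1)

theorem dualNormOf_le_iff [FiniteDimensional ℝ X] (N : X → ℝ) (hN : IsNormOn N)
    {c : ℝ} (hc : 0 ≤ c) (f : Module.Dual ℝ X) :
    dualNormOf N f ≤ c ↔ ∀ x, |f x| ≤ c * N x := by
  obtain ⟨cN, hcN, hN1, hN2⟩ := norm_equiv N hN
  constructor
  · intro h x
    set fc := LinearMap.toContinuousLinearMap f with hfc
    have hfc' : ∀ z, f z = fc z := fun z => rfl
    have bdd : BddAbove {r : ℝ | ∃ x, N x ≤ 1 ∧ r = |f x|} := by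
      refine ⟨‖fc‖ * cN, ?_⟩
      rintro r ⟨x, hx, rfl⟩
      have h1 : |f x| = ‖fc x‖ := by rw [hfc' x, Real.norm_eq_abs]
      have h2 : ‖fc x‖ ≤ ‖fc‖ * ‖x‖ := fc.le_opNorm x
      have h3 : ‖x‖ ≤ cN * N x := hN2 x
      have h4 : cN * N x ≤ cN * 1 := mul_le_mul_of_nonneg_left hx hcN.le
      have h5 : 0 ≤ ‖fc‖ := norm_nonneg _
      calc |f x| = ‖fc x‖ := h1
        _ ≤ ‖fc‖ * ‖x‖ := h2
        _ ≤ ‖fc‖ * (cN * N x) := mul_le_mul_of_nonneg_left h3 h5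
        _ ≤ ‖fc‖ * (cN * 1) := mul_le_mul_of_nonneg_left h4 h5
        _ = ‖fc‖ * cN := by ring
    by_cases hx0 : x = 0
    · simp [hx0, (normOn_zero hN)]
    · have hNx : 0 < N x := normOn_pos hN hx0
      set y := (N x)⁻¹ • x with hy
      have hNy : N y = 1 := by
        rw [hy, hN.2.2.1, abs_of_pos (inv_pos.mpr hNx), inv_mul_cancel₀ hNx.ne']
      have hmem : |f y| ∈ {r : ℝ | ∃ x, N x ≤ 1 ∧ r = |f x|} := ⟨y, hNy.le, rfl⟩
      have h6 : |f y| ≤ c := le_trans (le_csSup bdd hmem) h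
      have h7 : f x = N x * f y := by
        rw [hy, map_smul]
        simp [hNx.ne']
      rw [h7, abs_mul, abs_of_pos hNx]
      exact mul_le_mul_of_nonneg_left h6 hNx.le |>.trans (by rw [mul_comm])
  · intro h
    refine Real.sSup_le ?_ hc
    rintro r ⟨x, hx, rfl⟩
    calc |f x| ≤ c * N x := h x
      _ ≤ c * 1 := mul_le_mul_of_nonneg_left hx hc
      _ = c := mul_one c

theorem dualNormOf_le_one_iff [FiniteDimensional ℝ X] (N : X → ℝ) (hN : IsNormOn N)
    (f : Module.Dual ℝ X) :
    dualNormOf N f ≤ 1 ↔ ∀ x, |f x| ≤ N x := by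
  rw [dualNormOf_le_iff N hN zero_le_one f]
  simp

/-- Hahn–Banach transfer step for the lower bound. -/
theorem extend_step {𝔾 : Type} [NormedAddCommGroup 𝔾] [NormedSpace ℝ 𝔾]
    [FiniteDimensional ℝ X]
    (T U : X →ₗ[ℝ] 𝔾) {P Q : X → ℝ}
    (hT : ∀ x, ‖T x‖ = P x) (hU : ∀ x, ‖U x‖ = Q x)
    (hTinj : Function.Injective ⇑T)
    (a : Module.Dual ℝ X) (ha : ∀ x, |a x| ≤ P x) :
    ∃ b : Module.Dual ℝ X, (∀ x, |b x| ≤ Q x) ∧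
      ∀ x, |a x - b x| ≤ ‖LinearMap.toContinuousLinearMap (T - U)‖ * ‖x‖ := by
  set p : Submodule ℝ 𝔾 := LinearMap.range T with hp
  let e : X ≃ₗ[ℝ] p := LinearEquiv.ofInjective T hTinj
  haveI : FiniteDimensional ℝ p := e.finiteDimensional
  let f₀ : p →ₗ[ℝ] ℝ := a.comp e.symm.toLinearMap
  let f₀c : p →L[ℝ] ℝ := LinearMap.toContinuousLinearMap f₀
  have hf₀c : ∀ z : p, f₀c z = a (e.symm z) := fun z => rfl
  have hcoe : ∀ w : X, ((e w : p) : 𝔾) = T w := fun w => rfl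
  have hnorm1 : ‖f₀c‖ ≤ 1 := by
    refine f₀c.opNorm_le_bound zero_le_one fun z => ?_
    have hz : z = e (e.symm z) := (e.apply_symm_apply z).symm
    have h1 : ((z : p) : 𝔾) = T (e.symm z) := by
      conv_lhs => rw [hz]
      exact hcoe _
    have h2 : ‖(z : p)‖ = ‖((z : p) : 𝔾)‖ := rfl
    rw [hf₀c, Real.norm_eq_abs, one_mul, h2, h1, hT]
    exact ha _
  obtain ⟨g, hg1, hg2⟩ := exists_extension_norm_eq p f₀c
  have hgle : ‖g‖ ≤ 1 := hg2.le.trans hnorm1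
  have hgT : ∀ w : X, g (T w) = a w := by
    intro w
    have := hg1 (e w)
    rw [hcoe w] at this
    rw [this, hf₀c, e.symm_apply_apply]
  refine ⟨((g : 𝔾 →ₗ[ℝ] ℝ).comp U), fun x => ?_, fun x => ?_⟩
  · have h1 : |g (U x)| ≤ ‖g‖ * ‖U x‖ := by
      have := g.le_opNorm (U x)
      rwa [Real.norm_eq_abs] at this
    have h2 : ‖g‖ * ‖U x‖ ≤ 1 * ‖U x‖ :=
      mul_le_mul_of_nonneg_right hgle (norm_nonneg _)
    simpa [hU x] using h1.trans h2
  · have key : a x - g (U x) = g (T x - U x) := by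
      rw [map_sub, hgT x]
    show |a x - g (U x)| ≤ _
    rw [key]
    have h1 : |g (T x - U x)| ≤ ‖g‖ * ‖T x - U x‖ := by
      have := g.le_opNorm (T x - U x)
      rwa [Real.norm_eq_abs] at this
    have h2 : ‖T x - U x‖ = ‖LinearMap.toContinuousLinearMap (T - U) x‖ := by
      have : LinearMap.toContinuousLinearMap (T - U) x = T x - U x := rfl
      rw [this]
    have h3 : ‖LinearMap.toContinuousLinearMap (T - U) x‖ ≤
        ‖LinearMap.toContinuousLinearMap (T - U)‖ * ‖x‖ :=
      ContinuousLinearMap.le_opNorm _ x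
    calc |g (T x - U x)| ≤ ‖g‖ * ‖T x - U x‖ := h1
      _ ≤ 1 * ‖T x - U x‖ := mul_le_mul_of_nonneg_right hgle (norm_nonneg _)
      _ = ‖T x - U x‖ := one_mul _
      _ ≤ ‖LinearMap.toContinuousLinearMap (T - U)‖ * ‖x‖ := by rw [h2] at *; exact h3

/-- Construction of a pair of close embeddings from a Hausdorff bound on dual balls. -/
theorem upper_construction (𝔾 : Type) [NormedAddCommGroup 𝔾] [NormedSpace ℝ 𝔾]
    (huniv : ∀ (Z : Type) [NormedAddCommGroup Z] [NormedSpace ℝ Z]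
      [FiniteDimensional ℝ Z], Nonempty (Z →ₗᵢ[ℝ] 𝔾))
    [FiniteDimensional ℝ X] (P Q : X → ℝ) (hP : IsNormOn P) (hQ : IsNormOn Q)
    {δ ε : ℝ} (hδ0 : 0 ≤ δ) (hε : 0 < ε)
    (hfor : ∀ a : Module.Dual ℝ X, (∀ x, |a x| ≤ P x) →
      ∃ b : Module.Dual ℝ X, (∀ x, |b x| ≤ Q x) ∧ ∀ x, |a x - b x| ≤ δ * ‖x‖)
    (hback : ∀ b : Module.Dual ℝ X, (∀ x, |b x| ≤ Q x) →
      ∃ a : Module.Dual ℝ X, (∀ x, |a x| ≤ P x) ∧ ∀ x, |a x - b x| ≤ δ * ‖x‖) :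
    ∃ T U : X →ₗ[ℝ] 𝔾, Function.Injective ⇑T ∧ Function.Injective ⇑U ∧
      (∀ x, ‖T x‖ = P x) ∧ (∀ x, ‖U x‖ = Q x) ∧
      ‖LinearMap.toContinuousLinearMap (T - U)‖ ≤ δ + ε := by
  classical
  obtain ⟨cQ, hcQpos, hcQ1, _⟩ := norm_equiv Q hQ
  have hδε0 : 0 ≤ δ + ε := by linarith
  set A : Set (Module.Dual ℝ X × Module.Dual ℝ X) :=
    {p | (∀ x, |p.1 x| ≤ P x) ∧ (∀ x, |p.2 x| ≤ Q x) ∧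
      ∀ x, |p.1 x - p.2 x| ≤ (δ + ε) * ‖x‖} with hA
  set R : X × X → ℝ := fun v => sSup ((fun p :
      Module.Dual ℝ X × Module.Dual ℝ X => p.1 v.1 + p.2 v.2) '' A) with hRdef
  have hzero_memA : ((0 : Module.Dual ℝ X), (0 : Module.Dual ℝ X)) ∈ A := by
    refine ⟨fun x => by simpa using hP.1 x, fun x => by simpa using hQ.1 x, fun x => ?_⟩
    simpa using mul_nonneg hδε0 (norm_nonneg x)
  have hbdd : ∀ v : X × X, BddAbove ((fun p :
      Module.Dual ℝ X × Module.Dual ℝ X => p.1 v.1 + p.2 v.2) '' A) := by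
    intro v
    refine ⟨P v.1 + Q v.2, ?_⟩
    rintro r ⟨⟨a, b⟩, ⟨ha, hb, -⟩, rfl⟩
    exact add_le_add ((le_abs_self _).trans (ha v.1)) ((le_abs_self _).trans (hb v.2))
  have hmemle : ∀ (v : X × X) (a b : Module.Dual ℝ X), (a, b) ∈ A →
      a v.1 + b v.2 ≤ R v := fun v a b h => le_csSup (hbdd v) ⟨(a, b), h, rfl⟩
  have hR0 : ∀ v, 0 ≤ R v := fun v => by
    simpa using hmemle v 0 0 hzero_memA
  have hRle : ∀ (v : X × X) (c : ℝ), 0 ≤ c →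
      (∀ a b : Module.Dual ℝ X, (a, b) ∈ A → a v.1 + b v.2 ≤ c) → R v ≤ c := by
    intro v c hc h
    refine Real.sSup_le ?_ hc
    rintro r ⟨⟨a, b⟩, hab, rfl⟩
    exact h a b hab
  have hadd : ∀ v w : X × X, R (v + w) ≤ R v + R w := by
    intro v w
    refine hRle _ _ (add_nonneg (hR0 v) (hR0 w)) fun a b hab => ?_
    have h1 : a (v + w).1 + b (v + w).2 =
        (a v.1 + b v.2) + (a w.1 + b w.2) := by
      simp [Prod.fst_add, Prod.snd_add, map_add]; ring
    rw [h1]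
    exact add_le_add (hmemle v a b hab) (hmemle w a b hab)
  have hnegA : ∀ a b : Module.Dual ℝ X, (a, b) ∈ A → (-a, -b) ∈ A := by
    rintro a b ⟨ha, hb, hab⟩
    refine ⟨fun x => by simpa using ha x, fun x => by simpa using hb x, fun x => ?_⟩
    have : (-a) x - (-b) x = -(a x - b x) := by simp; ring
    rw [this, abs_neg]
    exact hab x
  have hsmul_le : ∀ (t : ℝ) (v : X × X), R (t • v) ≤ |t| * R v := by
    intro t v
    refine hRle _ _ (mul_nonneg (abs_nonneg t) (hR0 v)) fun a b hab => ?_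
    have h1 : a (t • v).1 + b (t • v).2 = t * (a v.1 + b v.2) := by
      simp [Prod.smul_fst, Prod.smul_snd, map_smul, smul_eq_mul]; ring
    rw [h1]
    rcases le_or_gt 0 t with ht | ht
    · rw [abs_of_nonneg ht]
      exact mul_le_mul_of_nonneg_left (hmemle v a b hab) ht
    · have h2 : t * (a v.1 + b v.2) = |t| * ((-a) v.1 + (-b) v.2) := by
        rw [abs_of_neg ht]; simp; ring
      rw [h2]
      exact mul_le_mul_of_nonneg_left (hmemle v (-a) (-b) (hnegA a b hab))
        (abs_nonneg t)
  have hR00 : R 0 = 0 := by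
    refine le_antisymm ?_ (hR0 0)
    have := hsmul_le 0 0
    simpa using this
  have hsmul : ∀ (t : ℝ) (v : X × X), R (t • v) = |t| * R v := by
    intro t v
    rcases eq_or_ne t 0 with rfl | ht
    · simpa [hR00] using hR00
    · refine le_antisymm (hsmul_le t v) ?_
      have h1 : R v ≤ |t⁻¹| * R (t • v) := by
        have := hsmul_le t⁻¹ (t • v)
        rwa [smul_smul, inv_mul_cancel₀ ht, one_smul] at this
      have h2 : |t| * R v ≤ |t| * (|t⁻¹| * R (t • v)) :=
        mul_le_mul_of_nonneg_left h1 (abs_nonneg t)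
      calc |t| * R v ≤ |t| * (|t⁻¹| * R (t • v)) := h2
        _ = R (t • v) := by
            rw [← mul_assoc, ← abs_mul, mul_inv_cancel₀ ht]
            simp
  have hRx0 : ∀ x : X, R (x, 0) = P x := by
    intro x
    refine le_antisymm ?_ ?_
    · refine hRle _ _ (hP.1 x) fun a b hab => ?_
      have : a x + b 0 = a x := by simp
      rw [this]
      exact (le_abs_self _).trans (hab.1 x)
    · obtain ⟨a₀, ha₀, ha₀x⟩ := exists_norming P hP x
      obtain ⟨b₀, hb₀, hab₀⟩ := hfor a₀ ha₀
      have hmem : (a₀, b₀) ∈ A := by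
        refine ⟨ha₀, hb₀, fun z => ?_⟩
        exact (hab₀ z).trans (mul_le_mul_of_nonneg_right (by linarith) (norm_nonneg z))
      have := hmemle (x, 0) a₀ b₀ hmem
      simpa [ha₀x] using this
  have hR0y : ∀ y : X, R (0, y) = Q y := by
    intro y
    refine le_antisymm ?_ ?_
    · refine hRle _ _ (hQ.1 y) fun a b hab => ?_
      have : a 0 + b y = b y := by simp
      rw [this]
      exact (le_abs_self _).trans (hab.2.1 y)
    · obtain ⟨b₀, hb₀, hb₀y⟩ := exists_norming Q hQ y
      obtain ⟨a₀, ha₀, hab₀⟩ := hback b₀ hb₀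
      have hmem : (a₀, b₀) ∈ A := by
        refine ⟨ha₀, hb₀, fun z => ?_⟩
        exact (hab₀ z).trans (mul_le_mul_of_nonneg_right (by linarith) (norm_nonneg z))
      have := hmemle (0, y) a₀ b₀ hmem
      simpa [hb₀y] using this
  have hdiag : ∀ x : X, R (x, -x) ≤ (δ + ε) * ‖x‖ := by
    intro x
    refine hRle _ _ (mul_nonneg hδε0 (norm_nonneg x)) fun a b hab => ?_
    have h1 : a x + b (-x) = a x - b x := by
      rw [map_neg]; ring
    rw [h1]
    exact (le_abs_self _).trans (hab.2.2 x)
  have hdef : ∀ v : X × X, R v = 0 → v = 0 := by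
    rintro ⟨x, y⟩ hv
    have hPQ : P x ≤ Q y := by
      have h1 : ((x, y) : X × X) + (0, -y) = (x, 0) := by simp
      have h2 := hadd (x, y) (0, -y)
      rw [h1, hRx0, hR0y, hv] at h2
      have : Q (-y) = Q y := normOn_neg hQ y
      rw [this] at h2
      linarith
    have hQP : Q y ≤ P x := by
      have h1 : ((x, y) : X × X) + (-x, 0) = (0, y) := by simp
      have h2 := hadd (x, y) (-x, 0)
      rw [h1, hR0y, hRx0, hv] at h2
      have : P (-x) = P x := normOn_neg hP x
      rw [this] at h2
      linarith
    have hs : P x = Q y := le_antisymm hPQ hQP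
    rcases eq_or_lt_of_le (hP.1 x) with h0 | hspos
    · -- P x = 0
      have hx : x = 0 := hP.2.1 x h0.symm
      have hy : y = 0 := hQ.2.1 y (by rw [← hs, ← h0])
      simp [hx, hy]
    · exfalso
      set s := P x with hsdef
      obtain ⟨g₁, hg₁, hg₁y⟩ := exists_norming Q hQ y
      obtain ⟨f₁, hf₁, hf₁g₁⟩ := hback g₁ hg₁
      have hpair1 : (f₁, g₁) ∈ A := by
        refine ⟨hf₁, hg₁, fun z => ?_⟩
        exact (hf₁g₁ z).trans (mul_le_mul_of_nonneg_right (by linarith) (norm_nonneg z))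
      have hval1 : f₁ x + g₁ y ≤ 0 := by
        have := hmemle (x, y) f₁ g₁ hpair1
        rwa [hv] at this
      have hg₁ys : g₁ y = s := by rw [hg₁y, ← hs]
      have hf₁x : f₁ x = -s := by
        have h1 : f₁ x ≤ -s := by rw [hg₁ys] at hval1; linarith
        have h2 : -s ≤ f₁ x := by
          have := (abs_le.mp (hf₁ x)).1
          rwa [← hsdef] at this
        linarith
      set t : ℝ := min 1 (ε / (cQ + 1)) with htdef
      have hcQ1pos : (0:ℝ) < cQ + 1 := by linarith
      have ht0 : 0 < t := lt_min one_pos (div_pos hε hcQ1pos)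
      have ht1 : t ≤ 1 := min_le_left _ _
      have htcQ : t * cQ ≤ ε := by
        have h1 : t ≤ ε / (cQ + 1) := min_le_right _ _
        have h2 : t * (cQ + 1) ≤ ε := by
          rw [← le_div_iff₀ hcQ1pos]; exact h1
        nlinarith
      have hg₁bd : ∀ z, |g₁ z| ≤ cQ * ‖z‖ := fun z => (hg₁ z).trans (hcQ1 z)
      have hpair2 : (((1 - t) • f₁ : Module.Dual ℝ X), g₁) ∈ A := by
        refine ⟨fun z => ?_, hg₁, fun z => ?_⟩
        · have h1 : |((1 - t) • f₁ : Module.Dual ℝ X) z| = (1 - t) * |f₁ z| := by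
            rw [LinearMap.smul_apply, smul_eq_mul, abs_mul, abs_of_nonneg (by linarith)]
          rw [h1]
          have := hf₁ z
          nlinarith [hP.1 z, abs_nonneg (f₁ z)]
        · have h1 : ((1 - t) • f₁ : Module.Dual ℝ X) z - g₁ z =
              (1 - t) * (f₁ z - g₁ z) + (-t) * g₁ z := by
            rw [LinearMap.smul_apply, smul_eq_mul]; ring
          rw [h1]
          have h2 : |(1 - t) * (f₁ z - g₁ z) + (-t) * g₁ z| ≤
              (1 - t) * |f₁ z - g₁ z| + t * |g₁ z| := by
            refine (abs_add_le _ _).trans ?_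
            rw [abs_mul, abs_mul, abs_of_nonneg (by linarith : (0:ℝ) ≤ 1 - t),
              abs_neg, abs_of_pos ht0]
          refine h2.trans ?_
          have h3 : |f₁ z - g₁ z| ≤ δ * ‖z‖ := hf₁g₁ z
          have h4 : |g₁ z| ≤ cQ * ‖z‖ := hg₁bd z
          nlinarith [norm_nonneg z, abs_nonneg (f₁ z - g₁ z), abs_nonneg (g₁ z)]
      have hval2 : ((1 - t) • f₁ : Module.Dual ℝ X) x + g₁ y ≤ 0 := by
        have := hmemle (x, y) _ _ hpair2
        rwa [hv] at this
      have hval2' : ((1 - t) • f₁ : Module.Dual ℝ X) x + g₁ y = t * s := by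
        rw [LinearMap.smul_apply, smul_eq_mul, hf₁x, hg₁ys]; ring
      rw [hval2'] at hval2
      nlinarith
  have hRnorm : IsNormOn R := ⟨hR0, hdef, hsmul, hadd⟩
  obtain ⟨W, hW⟩ := exists_embedding 𝔾 huniv R hRnorm
  set T : X →ₗ[ℝ] 𝔾 := W.comp (LinearMap.inl ℝ X X) with hT
  set U : X →ₗ[ℝ] 𝔾 := W.comp (LinearMap.inr ℝ X X) with hU
  have hTnorm : ∀ x, ‖T x‖ = P x := by
    intro x
    have : T x = W (x, 0) := rfl
    rw [this, hW, hRx0]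
  have hUnorm : ∀ x, ‖U x‖ = Q x := by
    intro x
    have : U x = W (0, x) := rfl
    rw [this, hW, hR0y]
  refine ⟨T, U, inj_of_norm T hP hTnorm, inj_of_norm U hQ hUnorm,
    hTnorm, hUnorm, ?_⟩
  refine ContinuousLinearMap.opNorm_le_bound _ hδε0 fun x => ?_
  have h1 : LinearMap.toContinuousLinearMap (T - U) x = T x - U x := rfl
  have h2 : T x - U x = W (x, -x) := by
    have : T x - U x = W ((x, 0) - (0, x)) := by
      rw [map_sub]; rfl
    rw [this]
    congr 1
    simp
  rw [h1, h2, hW]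
  exact hdiag x

end Facts

end GurarijAux

/-- For the Gurarij space `𝔾` (axiomatized as a separable Banach space which is universal
for finite-dimensional spaces and approximately ultrahomogeneous), for every
finite-dimensional normed space `X` and all norms `P, Q` on `X`:
`∂_{X,𝔾}(P,Q) = α_X(P,Q)`. -/
theorem partialDist_eq_alphaDist
    (𝔾 : Type) [NormedAddCommGroup 𝔾] [NormedSpace ℝ 𝔾] [CompleteSpace 𝔾]
    [TopologicalSpace.SeparableSpace 𝔾]
    (huniv : ∀ (Z : Type) [NormedAddCommGroup Z] [NormedSpace ℝ Z]
      [FiniteDimensional ℝ Z], Nonempty (Z →ₗᵢ[ℝ] 𝔾))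
    (hhomog : ∀ (Z : Type) [NormedAddCommGroup Z] [NormedSpace ℝ Z]
      [FiniteDimensional ℝ Z] (f g : Z →ₗᵢ[ℝ] 𝔾) (ε : ℝ), 0 < ε →
        ∃ h : 𝔾 ≃ₗᵢ[ℝ] 𝔾, ∀ z : Z, ‖h (f z) - g z‖ ≤ ε * ‖z‖)
    (X : Type) [NormedAddCommGroup X] [NormedSpace ℝ X] [FiniteDimensional ℝ X]
    (P Q : X → ℝ) (hP : IsNormOn P) (hQ : IsNormOn Q) :
    partialDist 𝔾 X P Q = alphaDist X P Q := by
  classical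
  obtain ⟨cP, hcPpos, hcP1, -⟩ := GurarijAux.norm_equiv P hP
  obtain ⟨cQ, hcQpos, hcQ1, -⟩ := GurarijAux.norm_equiv Q hQ
  have hNn : IsNormOn (fun x : X => ‖x‖) := GurarijAux.isNormOn_norm X
  have hBPiff : ∀ f : Module.Dual ℝ X, dualNormOf P f ≤ 1 ↔ ∀ x, |f x| ≤ P x :=
    GurarijAux.dualNormOf_le_one_iff P hP
  have hBQiff : ∀ f : Module.Dual ℝ X, dualNormOf Q f ≤ 1 ↔ ∀ x, |f x| ≤ Q x :=
    GurarijAux.dualNormOf_le_one_iff Q hQ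
  have hNdiff : ∀ (f : Module.Dual ℝ X) {c : ℝ}, 0 ≤ c →
      (dualNormOf (fun x : X => ‖x‖) f ≤ c ↔ ∀ x, |f x| ≤ c * ‖x‖) :=
    fun f c hc => GurarijAux.dualNormOf_le_iff _ hNn hc f
  set BP := {f : Module.Dual ℝ X | dualNormOf P f ≤ 1} with hBP
  set BQ := {f : Module.Dual ℝ X | dualNormOf Q f ≤ 1} with hBQ
  set Sα := {δ : ℝ | 0 ≤ δ ∧
      (∀ a ∈ BP, ∃ b ∈ BQ, dualNormOf (fun x : X => ‖x‖) (a - b) ≤ δ) ∧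
      ∀ b ∈ BQ, ∃ a ∈ BP, dualNormOf (fun x : X => ‖x‖) (a - b) ≤ δ} with hSα
  set Sd := {c : ℝ | ∃ T U : X →ₗ[ℝ] 𝔾,
      Function.Injective ⇑T ∧ Function.Injective ⇑U ∧
      (∀ x, ‖T x‖ = P x) ∧ (∀ x, ‖U x‖ = Q x) ∧
      c = ‖LinearMap.toContinuousLinearMap (T - U)‖} with hSd
  have hαeq : alphaDist X P Q = sInf Sα := rfl
  have hdeq : partialDist 𝔾 X P Q = sInf Sd := rfl
  -- Sd is nonempty and bounded below
  obtain ⟨T₀, hT₀⟩ := GurarijAux.exists_embedding 𝔾 huniv P hP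
  obtain ⟨U₀, hU₀⟩ := GurarijAux.exists_embedding 𝔾 huniv Q hQ
  have hSdne : Sd.Nonempty :=
    ⟨_, T₀, U₀, GurarijAux.inj_of_norm T₀ hP hT₀, GurarijAux.inj_of_norm U₀ hQ hU₀,
      hT₀, hU₀, rfl⟩
  have hSdbdd : BddBelow Sd := by
    refine ⟨0, ?_⟩
    rintro c ⟨T, U, -, -, -, -, rfl⟩
    exact norm_nonneg _
  -- Sα is nonempty and bounded below
  have hzeroBQ : (0 : Module.Dual ℝ X) ∈ BQ :=
    (hBQiff 0).mpr fun x => by simpa using hQ.1 x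
  have hzeroBP : (0 : Module.Dual ℝ X) ∈ BP :=
    (hBPiff 0).mpr fun x => by simpa using hP.1 x
  have hSαne : Sα.Nonempty := by
    refine ⟨cP + cQ, by linarith, fun a ha => ?_, fun b hb => ?_⟩
    · refine ⟨0, hzeroBQ, (hNdiff _ (by linarith)).mpr fun x => ?_⟩
      have h1 : |(a - 0 : Module.Dual ℝ X) x| = |a x| := by simp
      rw [h1]
      have h2 : |a x| ≤ P x := (hBPiff a).mp ha x
      have h3 : P x ≤ cP * ‖x‖ := hcP1 x
      nlinarith [norm_nonneg x]
    · refine ⟨0, hzeroBP, (hNdiff _ (by linarith)).mpr fun x => ?_⟩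
      have h1 : |(0 - b : Module.Dual ℝ X) x| = |b x| := by simp
      rw [h1]
      have h2 : |b x| ≤ Q x := (hBQiff b).mp hb x
      have h3 : Q x ≤ cQ * ‖x‖ := hcQ1 x
      nlinarith [norm_nonneg x]
  have hSαbdd : BddBelow Sα := ⟨0, fun δ hδ => hδ.1⟩
  rw [hαeq, hdeq]
  refine le_antisymm ?_ ?_
  · -- sInf Sd ≤ sInf Sα
    refine le_of_forall_pos_le_add fun ε hε => ?_
    obtain ⟨δ, hδSα, hδlt⟩ := Real.lt_sInf_add_pos hSαne (half_pos hε)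
    obtain ⟨hδ0, hfor', hback'⟩ := hδSα
    have hfor : ∀ a : Module.Dual ℝ X, (∀ x, |a x| ≤ P x) →
        ∃ b : Module.Dual ℝ X, (∀ x, |b x| ≤ Q x) ∧ ∀ x, |a x - b x| ≤ δ * ‖x‖ := by
      intro a hpa
      obtain ⟨b, hbBQ, hd⟩ := hfor' a ((hBPiff a).mpr hpa)
      refine ⟨b, (hBQiff b).mp hbBQ, fun x => ?_⟩
      have := ((hNdiff _ hδ0).mp hd) x
      simpa using this
    have hback : ∀ b : Module.Dual ℝ X, (∀ x, |b x| ≤ Q x) →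
        ∃ a : Module.Dual ℝ X, (∀ x, |a x| ≤ P x) ∧ ∀ x, |a x - b x| ≤ δ * ‖x‖ := by
      intro b hpb
      obtain ⟨a, haBP, hd⟩ := hback' b ((hBQiff b).mpr hpb)
      refine ⟨a, (hBPiff a).mp haBP, fun x => ?_⟩
      have := ((hNdiff _ hδ0).mp hd) x
      simpa using this
    obtain ⟨T, U, hTi, hUi, hTn, hUn, hb⟩ :=
      GurarijAux.upper_construction 𝔾 huniv P Q hP hQ hδ0 (half_pos hε) hfor hback
    have hmem : ‖LinearMap.toContinuousLinearMap (T - U)‖ ∈ Sd :=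
      ⟨T, U, hTi, hUi, hTn, hUn, rfl⟩
    calc sInf Sd ≤ ‖LinearMap.toContinuousLinearMap (T - U)‖ := csInf_le hSdbdd hmem
      _ ≤ δ + ε / 2 := hb
      _ ≤ sInf Sα + ε := by linarith
  · -- sInf Sα ≤ sInf Sd
    refine le_csInf hSdne ?_
    rintro c ⟨T, U, hTi, hUi, hTn, hUn, rfl⟩
    refine csInf_le hSαbdd ⟨norm_nonneg _, ?_, ?_⟩
    · intro a haBP
      obtain ⟨b, hb, hd⟩ := GurarijAux.extend_step T U hTn hUn hTi a ((hBPiff a).mp haBP)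
      refine ⟨b, (hBQiff b).mpr hb, (hNdiff _ (norm_nonneg _)).mpr fun x => ?_⟩
      simpa using hd x
    · intro b hbBQ
      obtain ⟨a, ha, hd⟩ := GurarijAux.extend_step U T hUn hTn hUi b ((hBQiff b).mp hbBQ)
      have hnorm : ‖LinearMap.toContinuousLinearMap (U - T)‖ =
          ‖LinearMap.toContinuousLinearMap (T - U)‖ := by
        have h1 : (U - T : X →ₗ[ℝ] 𝔾) = -(T - U) := by abel
        rw [h1, map_neg, norm_neg]
      refine ⟨a, (hBPiff a).mpr ha, (hNdiff _ (norm_nonneg _)).mpr fun x => ?_⟩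
      have := hd x
      rw [hnorm] at this
      have h2 : |(a - b : Module.Dual ℝ X) x| = |b x - a x| := by
        rw [LinearMap.sub_apply, abs_sub_comm]
      rw [h2]
      exact this
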